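/- Let $n, s \ge 1$ and let $b \in L_1(\mathbb{R}^d)$ satisfy $\int_Q b = 0$ for every dyadic cube $Q$ of side length $2^{-(n+s)}$. Then for every integer $k < n$, $\|M_k b\|_1 \le C_d \, 2^{-s} \, 2^{k-n} \|b\|_1$, where $M_k b(x) = \frac{1}{|B(0,2^{-k})|}\int_{B(0,2^{-k})} b(x+y)\,dy$. -/

import Mathlib

open MeasureTheory Metric

noncomputable section

/-- Euclidean space `ℝ^d`. -/
abbrev Euc (d : ℕ) := EuclideanSpace ℝ (Fin d)

/-- The standard dyadic cube at scale `n` (side length `2^{-n}`) indexed by `m`. -/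
def dyadicCube (d : ℕ) (n : ℤ) (m : Fin d → ℤ) : Set (Euc d) :=
  {y | ∀ j, (m j : ℝ) * 2 ^ (-n) ≤ y j ∧ y j < ((m j : ℝ) + 1) * 2 ^ (-n)}

/-- Index of the dyadic cube at scale `n` containing `x`. -/
def dyadicIdx (d : ℕ) (n : ℤ) (x : Euc d) : Fin d → ℤ :=
  fun j => ⌊(2 : ℝ) ^ n * x j⌋

/-- Dyadic conditional expectation at scale `2^{-n}`. -/
def Ek (d : ℕ) (n : ℤ) (h : Euc d → ℝ) (x : Euc d) : ℝ :=
  (2 : ℝ) ^ (n * d) * ∫ y in dyadicCube d n (dyadicIdx d n x), h y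

/-- Average over the Euclidean ball of radius `2^{-k}` centered at `x`. -/
def Mk (d : ℕ) (k : ℤ) (h : Euc d → ℝ) (x : Euc d) : ℝ :=
  ((volume (ball (0 : Euc d) ((2 : ℝ) ^ (-k)))).toReal)⁻¹ *
    ∫ y in ball x ((2 : ℝ) ^ (-k)), h y

/-- Indices of dyadic cubes at scale `n` meeting the boundary of the ball `B(x, 2^{-k})`. -/
def bdryIdx (d : ℕ) (k n : ℤ) (x : Euc d) : Set (Fin d → ℤ) :=
  {m | (dyadicCube d n m ∩ frontier (ball x ((2 : ℝ) ^ (-k)))).Nonempty}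

/-- `𝓘(B_k + x, n)`: union over boundary cubes `Q` at scale `n` of `Q ∩ B(x,2^{-k})`. -/
def Ikn (d : ℕ) (k n : ℤ) (x : Euc d) : Set (Euc d) :=
  ⋃ m ∈ bdryIdx d k n x, dyadicCube d n m ∩ ball x ((2 : ℝ) ^ (-k))

/-- The operator `M_{k,n}`. -/
def Mkn (d : ℕ) (k n : ℤ) (h : Euc d → ℝ) (x : Euc d) : ℝ :=
  ((volume (ball (0 : Euc d) ((2 : ℝ) ^ (-k)))).toReal)⁻¹ * ∫ y in Ikn d k n x, h y

/-- The concentric dilation `iQ` of the dyadic cube at scale `n` indexed by `m`. -/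
def cubeDil (d : ℕ) (i : ℕ) (n : ℤ) (m : Fin d → ℤ) : Set (Euc d) :=
  {y | ∀ j, ((m j : ℝ) + 1 / 2) * 2 ^ (-n) - (i : ℝ) * 2 ^ (-n) / 2 ≤ y j ∧
      y j < ((m j : ℝ) + 1 / 2) * 2 ^ (-n) + (i : ℝ) * 2 ^ (-n) / 2}

open scoped ENNReal

section Aux

variable {d : ℕ}

lemma mem_dyadicCube_iff {N : ℤ} {m : Fin d → ℤ} {y : Euc d} :
    y ∈ dyadicCube d N m ↔ ∀ j, ⌊(2:ℝ) ^ N * y j⌋ = m j := by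
  have hc : (0:ℝ) < 2 ^ N := zpow_pos (by norm_num) N
  unfold dyadicCube
  simp only [Set.mem_setOf_eq]
  refine forall_congr' fun j => ?_
  rw [Int.floor_eq_iff, zpow_neg, ← div_eq_mul_inv, ← div_eq_mul_inv, div_le_iff₀ hc,
    lt_div_iff₀ hc, mul_comm ((2:ℝ)^N) (y j)]

lemma measurableSet_dyadicCube (N : ℤ) (m : Fin d → ℤ) :
    MeasurableSet (dyadicCube d N m) := by
  have : dyadicCube d N m = ⋂ j, (fun y : Euc d => y j) ⁻¹'
      (Set.Ico ((m j : ℝ) * 2 ^ (-N)) (((m j : ℝ) + 1) * 2 ^ (-N))) := by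
    ext y; simp [dyadicCube, Set.mem_iInter]
  rw [this]
  exact MeasurableSet.iInter fun j =>
    ((by fun_prop : Continuous fun y : Euc d => y j).measurable) measurableSet_Ico

lemma convex_dyadicCube (N : ℤ) (m : Fin d → ℤ) : Convex ℝ (dyadicCube d N m) := by
  intro y hy z hz a b ha hb hab
  intro j
  have h1 := hy j; have h2 := hz j
  have hj : (a • y + b • z) j = a * y j + b * z j := rfl
  rw [hj]
  set L := ((m j : ℝ)) * 2 ^ (-N) with hL
  set U := ((m j : ℝ) + 1) * 2 ^ (-N) with hU
  have eL : a * L + b * L = L := by rw [← add_mul, hab, one_mul]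
  have eU : a * U + b * U = U := by rw [← add_mul, hab, one_mul]
  constructor
  · have t1 := mul_le_mul_of_nonneg_left h1.1 ha
    have t2 := mul_le_mul_of_nonneg_left h2.1 hb
    linarith
  · rcases ha.lt_or_eq with hpos | hzero
    · have t1 := mul_lt_mul_of_pos_left h1.2 hpos
      have t2 := mul_le_mul_of_nonneg_left h2.2.le hb
      linarith
    · have hb1 : b = 1 := by linarith
      rw [← hzero, hb1]
      simpa using h2.2

lemma pairwise_disjoint_dyadicCube (N : ℤ) :
    Pairwise (Function.onFun Disjoint fun m : Fin d → ℤ => dyadicCube d N m) := by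
  intro m m' hne
  rw [Function.onFun, Set.disjoint_left]
  intro y hy hy'
  exact hne (funext fun j => ((mem_dyadicCube_iff.1 hy) j).symm.trans ((mem_dyadicCube_iff.1 hy') j))

lemma iUnion_dyadicCube (N : ℤ) :
    (⋃ m : Fin d → ℤ, dyadicCube d N m) = Set.univ := by
  ext y
  simp only [Set.mem_iUnion, Set.mem_univ, iff_true]
  exact ⟨fun j => ⌊(2:ℝ) ^ N * y j⌋, mem_dyadicCube_iff.2 fun j => rfl⟩

lemma dist_le_of_mem_dyadicCube {N : ℤ} {m : Fin d → ℤ} {y z : Euc d}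
    (hy : y ∈ dyadicCube d N m) (hz : z ∈ dyadicCube d N m) :
    dist y z ≤ Real.sqrt d * 2 ^ (-N) := by
  have hc : (0:ℝ) < 2 ^ (-N) := zpow_pos (by norm_num) _
  rw [EuclideanSpace.dist_eq]
  have hbound : ∀ j, dist (y j) (z j) ^ 2 ≤ (2 ^ (-N) : ℝ) ^ 2 := by
    intro j
    have h1 := hy j; have h2 := hz j
    rw [Real.dist_eq]
    have : |y j - z j| ≤ 2 ^ (-N) := by
      rw [abs_le]; constructor <;> nlinarith [h1.1, h1.2, h2.1, h2.2]
    nlinarith [abs_nonneg (y j - z j)]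
  calc Real.sqrt (∑ i, dist (y i) (z i) ^ 2) ≤ Real.sqrt (d * (2 ^ (-N) : ℝ) ^ 2) := by
        apply Real.sqrt_le_sqrt
        calc (∑ i, dist (y i) (z i) ^ 2) ≤ ∑ _i : Fin d, (2 ^ (-N) : ℝ) ^ 2 :=
              Finset.sum_le_sum fun i _ => hbound i
          _ = d * (2 ^ (-N) : ℝ) ^ 2 := by simp [Finset.sum_const, mul_comm]
    _ = Real.sqrt d * 2 ^ (-N) := by
        rw [Real.sqrt_mul (by positivity), Real.sqrt_sq hc.le]

lemma abs_setIntegral_ball_le (N : ℤ) (b : Euc d → ℝ) (hb : Integrable b volume)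
    (hz : ∀ m, ∫ y in dyadicCube d N m, b y = 0) (x : Euc d) {r : ℝ} (hr : 0 < r) :
    |∫ y in ball x r, b y| ≤
      ∫ y in ball x r \ ball x (r - Real.sqrt d * 2 ^ (-N)), |b y| := by
  set δ' := Real.sqrt d * 2 ^ (-N) with hδ'
  set D := ball x r \ ball x (r - δ') with hD
  set Q := fun m : Fin d → ℤ => dyadicCube d N m with hQ
  set sf := fun m => Q m ∩ ball x r with hsf
  set tf := fun m => Q m ∩ D with htf
  have hQmeas : ∀ m, MeasurableSet (Q m) := measurableSet_dyadicCube N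
  have hDmeas : MeasurableSet D := measurableSet_ball.diff measurableSet_ball
  have hsmeas : ∀ m, MeasurableSet (sf m) := fun m => (hQmeas m).inter measurableSet_ball
  have htmeas : ∀ m, MeasurableSet (tf m) := fun m => (hQmeas m).inter hDmeas
  have hsdisj : Pairwise (Function.onFun Disjoint sf) := fun m m' h =>
    ((pairwise_disjoint_dyadicCube N) h).mono Set.inter_subset_left Set.inter_subset_left
  have htdisj : Pairwise (Function.onFun Disjoint tf) := fun m m' h =>
    ((pairwise_disjoint_dyadicCube N) h).mono Set.inter_subset_left Set.inter_subset_left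
  have hsU : (⋃ m, sf m) = ball x r := by
    rw [hsf]; rw [← Set.iUnion_inter, iUnion_dyadicCube, Set.univ_inter]
  have htU : (⋃ m, tf m) = D := by
    rw [htf]; rw [← Set.iUnion_inter, iUnion_dyadicCube, Set.univ_inter]
  have h1 : HasSum (fun m => ∫ y in sf m, b y) (∫ y in ball x r, b y) := by
    have := hasSum_integral_iUnion hsmeas hsdisj (f := b) (μ := volume)
      (by rw [hsU]; exact hb.integrableOn)
    rwa [hsU] at this
  have h2 : HasSum (fun m => ∫ y in tf m, |b y|) (∫ y in D, |b y|) := by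
    have := hasSum_integral_iUnion htmeas htdisj (f := fun y => |b y|) (μ := volume)
      (by rw [htU]; exact hb.abs.integrableOn)
    rwa [htU] at this
  have hterm : ∀ m, |∫ y in sf m, b y| ≤ ∫ y in tf m, |b y| := by
    intro m
    have hRHSnn : 0 ≤ ∫ y in tf m, |b y| :=
      setIntegral_nonneg (htmeas m) fun y _ => abs_nonneg _
    by_cases hf : (Q m ∩ frontier (ball x r)).Nonempty
    · obtain ⟨z, hzQ, hzf⟩ := hf
      rw [frontier_ball x hr.ne'] at hzf
      have hzx : dist z x = r := mem_sphere.1 hzf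
      have hsub : sf m ⊆ tf m := by
        rintro y ⟨hyQ, hyB⟩
        refine ⟨hyQ, hyB, fun hyB' => ?_⟩
        rw [mem_ball] at hyB'
        have hdz : dist y z ≤ δ' := dist_le_of_mem_dyadicCube hyQ hzQ
        have htri := dist_triangle z y x
        rw [dist_comm z y] at htri
        rw [hzx] at htri
        linarith
      calc |∫ y in sf m, b y| ≤ ∫ y in sf m, |b y| := by
            simpa [Real.norm_eq_abs] using
              norm_integral_le_integral_norm (μ := volume.restrict (sf m)) b
        _ ≤ ∫ y in tf m, |b y| := by
            exact setIntegral_mono_set hb.abs.integrableOn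
              (Filter.Eventually.of_forall fun y => abs_nonneg _)
              (HasSubset.Subset.eventuallyLE hsub)
    · by_cases hne : (Q m ∩ ball x r).Nonempty
      · have hQsub : Q m ⊆ ball x r := by
          refine IsPreconnected.subset_left_of_subset_union
            (v := (closure (ball x r))ᶜ) isOpen_ball
            (isOpen_compl_iff.2 isClosed_closure) ?_ ?_ hne
            ((convex_dyadicCube N m).isPreconnected)
          · exact Set.disjoint_left.2 fun y hy hyc => hyc (subset_closure hy)
          · intro y hy
            by_cases hyb : y ∈ ball x r
            · exact Or.inl hyb
            · refine Or.inr fun hyc => ?_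
              exact hf ⟨y, hy, by
                rw [isOpen_ball.frontier_eq]
                exact ⟨hyc, hyb⟩⟩
        have hseq : sf m = Q m := Set.inter_eq_left.2 hQsub
        rw [hseq, hz m]
        simpa using hRHSnn
      · have hseq : sf m = ∅ := Set.not_nonempty_iff_eq_empty.1 hne
        rw [hseq]
        simpa using hRHSnn
  have hsum_abs : Summable (fun m => |∫ y in sf m, b y|) :=
    Summable.of_nonneg_of_le (fun m => abs_nonneg _) hterm h2.summable
  rw [← h1.tsum_eq, ← h2.tsum_eq]
  have hn : (fun m => ‖∫ y in sf m, b y‖) = fun m => |∫ y in sf m, b y| :=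
    funext fun m => Real.norm_eq_abs _
  calc |∑' m, ∫ y in sf m, b y| ≤ ∑' m, |∫ y in sf m, b y| := by
        have := norm_tsum_le_tsum_norm (f := fun m => ∫ y in sf m, b y) (by rw [hn]; exact hsum_abs)
        rw [hn] at this
        simpa [Real.norm_eq_abs] using this
    _ ≤ ∑' m, ∫ y in tf m, |b y| := Summable.tsum_le_tsum hterm hsum_abs h2.summable

lemma pow_sub_pow_le_aux {r r'' : ℝ} (h0 : 0 ≤ r'') (h : r'' ≤ r) (d : ℕ) :
    r ^ d - r'' ^ d ≤ d * r ^ (d - 1) * (r - r'') := by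
  rw [← geom_sum₂_mul r r'' d]
  apply mul_le_mul_of_nonneg_right ?_ (sub_nonneg.2 h)
  have h0r : 0 ≤ r := h0.trans h
  calc (∑ i ∈ Finset.range d, r ^ i * r'' ^ (d - 1 - i))
      ≤ ∑ _i ∈ Finset.range d, r ^ (d - 1) := by
        apply Finset.sum_le_sum
        intro i hi
        have hi' : i ≤ d - 1 := by
          have := Finset.mem_range.1 hi; omega
        calc r ^ i * r'' ^ (d - 1 - i) ≤ r ^ i * r ^ (d - 1 - i) :=
              mul_le_mul_of_nonneg_left (pow_le_pow_left₀ h0 h _) (pow_nonneg h0r i)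
          _ = r ^ (d - 1) := by rw [← pow_add]; congr 1; omega
    _ = d * r ^ (d - 1) := by simp [Finset.sum_const, mul_comm]

end Aux

/-- If `b` has vanishing integral on every dyadic cube at scale `n+s`, then for `k < n`,
`‖M_k b‖₁ ≤ C_d 2^{-s} 2^{k-n} ‖b‖₁`. -/
theorem Mk_off_diagonal_L1 (d : ℕ) (hd : 0 < d) :
    ∃ C : ℝ, 0 < C ∧ ∀ (n s : ℕ), 1 ≤ n → 1 ≤ s → ∀ b : Euc d → ℝ, Integrable b volume →
      (∀ m : Fin d → ℤ, ∫ y in dyadicCube d (n + s) m, b y = 0) →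
      ∀ k : ℤ, k < n →
        ∫ x, |Mk d k b x| ≤ C * 2 ^ (-(s : ℤ)) * 2 ^ (k - n) * ∫ x, |b x| := by
  have hd0 : (0:ℝ) < d := Nat.cast_pos.2 hd
  refine ⟨d * Real.sqrt d, mul_pos hd0 (Real.sqrt_pos.2 hd0), ?_⟩
  intro n s hn hs b hb hz k hk
  haveI : Nonempty (Fin d) := ⟨⟨0, hd⟩⟩
  have hbabs : 0 ≤ ∫ x, |b x| := integral_nonneg fun x => abs_nonneg _
  set r : ℝ := 2 ^ (-k) with hrdef
  have hr : 0 < r := zpow_pos (by norm_num) _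
  set N : ℤ := (n : ℤ) + s with hNdef
  set δ' : ℝ := Real.sqrt d * 2 ^ (-N) with hδ'def
  have hδ'pos : 0 < δ' := mul_pos (Real.sqrt_pos.2 hd0) (zpow_pos (by norm_num) _)
  set K : ℝ := (d : ℝ) * Real.sqrt d * 2 ^ (-(s:ℤ)) * 2 ^ (k - (n:ℤ)) with hKdef
  have hKpos : 0 < K := by
    apply mul_pos (mul_pos (mul_pos hd0 (Real.sqrt_pos.2 hd0)) (zpow_pos (by norm_num) _))
      (zpow_pos (by norm_num) _)
  have hexp : (2:ℝ) ^ (-(s:ℤ)) * 2 ^ (k - (n:ℤ)) * 2 ^ (-k) = 2 ^ (-N) := by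
    rw [hNdef, ← zpow_add₀ (by norm_num : (2:ℝ) ≠ 0), ← zpow_add₀ (by norm_num : (2:ℝ) ≠ 0)]
    congr 1
    ring
  have hKr : K * r = (d : ℝ) * δ' := by
    rw [hKdef, hrdef, hδ'def, ← hexp]
    ring
  by_cases hI : Integrable (fun x => |Mk d k b x|) volume
  swap
  · rw [integral_undef hI]
    positivity
  -- the interesting case
  set V : ℝ≥0∞ := volume (ball (0 : Euc d) r) with hVdef
  have hV0 : V ≠ 0 := (measure_ball_pos _ _ hr).ne'
  have hVtop : V ≠ ⊤ := measure_ball_lt_top.ne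
  -- measurable representative of b
  have hbm := hb.aestronglyMeasurable
  set b' : Euc d → ℝ := hbm.mk b with hb'def
  have hb'meas : StronglyMeasurable b' := hbm.stronglyMeasurable_mk
  have hbb' : b =ᵐ[volume] b' := hbm.ae_eq_mk
  set g : Euc d → ℝ≥0∞ := fun y => ENNReal.ofReal |b' y| with hgdef
  have hgmeas : Measurable g := ENNReal.measurable_ofReal.comp hb'meas.measurable.abs
  set A : Euc d → Set (Euc d) := fun x => ball x r \ ball x (r - δ') with hAdef
  have hAmeas : ∀ x, MeasurableSet (A x) := fun x => measurableSet_ball.diff measurableSet_ball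
  -- pointwise bound
  have hpoint : ∀ x, ENNReal.ofReal |Mk d k b x| ≤ V⁻¹ * ∫⁻ y in A x, g y := by
    intro x
    have h1 : |Mk d k b x| = V.toReal⁻¹ * |∫ y in ball x r, b y| := by
      rw [Mk, abs_mul, abs_of_nonneg (inv_nonneg.2 ENNReal.toReal_nonneg)]
    have h2 : |∫ y in ball x r, b y| ≤ ∫ y in A x, |b y| :=
      abs_setIntegral_ball_le N b hb hz x hr
    rw [h1, ENNReal.ofReal_mul (inv_nonneg.2 ENNReal.toReal_nonneg)]
    have hVinv : ENNReal.ofReal V.toReal⁻¹ = V⁻¹ := by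
      rw [ENNReal.ofReal_inv_of_pos (ENNReal.toReal_pos hV0 hVtop),
        ENNReal.ofReal_toReal hVtop]
    rw [hVinv]
    refine mul_le_mul' le_rfl ?_
    calc ENNReal.ofReal |∫ y in ball x r, b y| ≤ ENNReal.ofReal (∫ y in A x, |b y|) :=
          ENNReal.ofReal_le_ofReal h2
      _ = ∫⁻ y in A x, ENNReal.ofReal |b y| :=
          ofReal_integral_eq_lintegral_ofReal hb.abs.integrableOn
            (Filter.Eventually.of_forall fun y => abs_nonneg _)
      _ = ∫⁻ y in A x, g y := lintegral_congr_ae (by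
            filter_upwards [ae_restrict_of_ae hbb'] with y hy
            rw [hgdef]
            dsimp only
            rw [hy])
  have hTfin : ∫⁻ y, g y < ⊤ := by
    have hfin := hb.2
    rw [hasFiniteIntegral_iff_norm] at hfin
    calc ∫⁻ y, g y = ∫⁻ y, ENNReal.ofReal ‖b y‖ := lintegral_congr_ae (by
          filter_upwards [hbb'] with y hy
          rw [hgdef]
          dsimp only
          rw [hy, Real.norm_eq_abs])
      _ < ⊤ := hfin
  have hbl1 : ∫ x, |b x| = (∫⁻ y, g y).toReal := by
    rw [integral_eq_lintegral_of_nonneg_ae (Filter.Eventually.of_forall fun y => abs_nonneg _)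
      hb.abs.aestronglyMeasurable]
    congr 1
    apply lintegral_congr_ae
    filter_upwards [hbb'] with y hy
    rw [hgdef]
    dsimp only
    rw [hy]
  -- annulus volume
  set W : ℝ≥0∞ := volume (ball (0:Euc d) r \ ball (0:Euc d) (r - δ')) with hWdef
  have hWle : W ≤ V := measure_mono Set.diff_subset
  have hWtop : W ≠ ⊤ := (lt_of_le_of_lt hWle hVtop.lt_top).ne
  have hDyvol : ∀ y : Euc d, volume (ball y r \ ball y (r - δ')) = W := by
    intro y
    rw [hWdef,
      measure_diff (ball_subset_ball (by linarith)) measurableSet_ball.nullMeasurableSet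
        measure_ball_lt_top.ne,
      measure_diff (ball_subset_ball (by linarith)) measurableSet_ball.nullMeasurableSet
        measure_ball_lt_top.ne,
      Measure.addHaar_ball_center volume y r, Measure.addHaar_ball_center volume y (r - δ')]
  -- Tonelli
  have hdistm : Measurable fun p : Euc d × Euc d => dist p.2 p.1 :=
    (continuous_dist.comp (continuous_snd.prodMk continuous_fst)).measurable
  have hS : MeasurableSet {p : Euc d × Euc d | dist p.2 p.1 < r ∧ ¬ dist p.2 p.1 < r - δ'} := by
    have heq : {p : Euc d × Euc d | dist p.2 p.1 < r ∧ ¬ dist p.2 p.1 < r - δ'} =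
        ((fun p : Euc d × Euc d => dist p.2 p.1) ⁻¹' Set.Iio r) ∩
          ((fun p : Euc d × Euc d => dist p.2 p.1) ⁻¹' Set.Iio (r - δ'))ᶜ := rfl
    rw [heq]
    exact (hdistm measurableSet_Iio).inter (hdistm measurableSet_Iio).compl
  have hunc : Measurable (Function.uncurry fun x y => (A x).indicator g y) := by
    have heq : (Function.uncurry fun x y => (A x).indicator g y) =
        Set.indicator {p : Euc d × Euc d | dist p.2 p.1 < r ∧ ¬ dist p.2 p.1 < r - δ'}
          (fun p => g p.2) := by
      funext p
      rcases p with ⟨x, y⟩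
      simp only [Function.uncurry, Set.indicator, hAdef, Set.mem_diff, mem_ball,
        Set.mem_setOf_eq]
    rw [heq]
    exact (hgmeas.comp measurable_snd).indicator hS
  have hswap : ∫⁻ x, ∫⁻ y in A x, g y = ∫⁻ y, g y * W := by
    calc ∫⁻ x, ∫⁻ y in A x, g y
        = ∫⁻ x, ∫⁻ y, (A x).indicator g y := by
          exact lintegral_congr fun x => (lintegral_indicator (hAmeas x) g).symm
      _ = ∫⁻ y, ∫⁻ x, (A x).indicator g y := lintegral_lintegral_swap hunc.aemeasurable
      _ = ∫⁻ y, g y * W := by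
          refine lintegral_congr fun y => ?_
          have hind : ∀ x, (A x).indicator g y
              = (ball y r \ ball y (r - δ')).indicator (fun _ => g y) x := by
            intro x
            simp only [Set.indicator, hAdef, Set.mem_diff, mem_ball]
            rw [dist_comm y x]
          rw [lintegral_congr fun x => hind x,
            lintegral_indicator_const (measurableSet_ball.diff measurableSet_ball),
            hDyvol y]
  -- volume computations
  set ι : ℝ≥0∞ := volume (ball (0:Euc d) 1) with hιdef
  have hιtop : ι ≠ ⊤ := measure_ball_lt_top.ne
  have hVform : V = ENNReal.ofReal (r ^ d) * ι := by
    rw [hVdef, Measure.addHaar_ball volume _ hr.le, finrank_euclideanSpace_fin]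
  set r'' : ℝ := max (r - δ') 0 with hr''def
  have hr''0 : 0 ≤ r'' := le_max_right _ _
  have hr''r : r'' ≤ r := max_le (by linarith) hr.le
  have hball'' : ball (0:Euc d) (r - δ') = ball (0:Euc d) r'' := by
    rcases le_total (r - δ') 0 with h | h
    · rw [ball_eq_empty.2 h, hr''def, max_eq_right h, eq_comm, ball_eq_empty]
    · rw [hr''def, max_eq_left h]
  have hWform : W = ENNReal.ofReal (r ^ d) * ι - ENNReal.ofReal (r'' ^ d) * ι := by
    rw [hWdef, hball'',
      measure_diff (ball_subset_ball hr''r) measurableSet_ball.nullMeasurableSet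
        measure_ball_lt_top.ne,
      Measure.addHaar_ball volume _ hr''0, Measure.addHaar_ball volume _ hr.le,
      finrank_euclideanSpace_fin]
  have hrpow : (0:ℝ) ≤ r ^ d - r'' ^ d :=
    sub_nonneg.2 (pow_le_pow_left₀ hr''0 hr''r d)
  have hreal : r ^ d - r'' ^ d ≤ K * r ^ d := by
    have h1 := pow_sub_pow_le_aux hr''0 hr''r d
    have h2 : r - r'' ≤ δ' := by
      have := le_max_left (r - δ') 0
      rw [← hr''def] at this
      linarith
    have h3 : (d:ℝ) * r ^ (d-1) * (r - r'') ≤ (d:ℝ) * r ^ (d-1) * δ' :=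
      mul_le_mul_of_nonneg_left h2 (by positivity)
    have hd1 : d - 1 + 1 = d := Nat.succ_pred_eq_of_pos hd
    have hpow : r ^ d = r ^ (d-1) * r := by rw [← pow_succ, hd1]
    have h4 : K * r ^ d = (d:ℝ) * r ^ (d-1) * δ' := by
      calc K * r ^ d = (K * r) * r ^ (d-1) := by rw [hpow]; ring
        _ = ((d:ℝ) * δ') * r ^ (d-1) := by rw [hKr]
        _ = (d:ℝ) * r ^ (d-1) * δ' := by ring
    linarith
  have hWK : W ≤ ENNReal.ofReal K * V := by
    rw [hWform, hVform]
    have hofadd : ENNReal.ofReal (r ^ d - r'' ^ d) + ENNReal.ofReal (r'' ^ d)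
        = ENNReal.ofReal (r ^ d) := by
      rw [← ENNReal.ofReal_add hrpow (pow_nonneg hr''0 d)]
      congr 1
      ring
    have hsub : ENNReal.ofReal (r ^ d) * ι - ENNReal.ofReal (r'' ^ d) * ι
        ≤ ENNReal.ofReal (r ^ d - r'' ^ d) * ι := by
      rw [tsub_le_iff_right, ← add_mul, hofadd]
    calc ENNReal.ofReal (r ^ d) * ι - ENNReal.ofReal (r'' ^ d) * ι
        ≤ ENNReal.ofReal (r ^ d - r'' ^ d) * ι := hsub
      _ ≤ ENNReal.ofReal (K * r ^ d) * ι :=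
          mul_le_mul_left (ENNReal.ofReal_le_ofReal hreal) ι
      _ = ENNReal.ofReal K * (ENNReal.ofReal (r ^ d) * ι) := by
          rw [ENNReal.ofReal_mul hKpos.le, mul_assoc]
  have hVW : V⁻¹ * W ≤ ENNReal.ofReal K := by
    calc V⁻¹ * W ≤ V⁻¹ * (ENNReal.ofReal K * V) := mul_le_mul_right hWK _
      _ = ENNReal.ofReal K * (V⁻¹ * V) := by ring
      _ = ENNReal.ofReal K := by rw [ENNReal.inv_mul_cancel hV0 hVtop, mul_one]
  -- conclusion
  calc ∫ x, |Mk d k b x|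
      = (∫⁻ x, ENNReal.ofReal |Mk d k b x|).toReal :=
        integral_eq_lintegral_of_nonneg_ae (Filter.Eventually.of_forall fun x => abs_nonneg _)
          hI.aestronglyMeasurable
    _ ≤ (ENNReal.ofReal K * ∫⁻ y, g y).toReal := by
        apply ENNReal.toReal_mono (ENNReal.mul_ne_top ENNReal.ofReal_ne_top hTfin.ne)
        calc ∫⁻ x, ENNReal.ofReal |Mk d k b x|
            ≤ ∫⁻ x, V⁻¹ * ∫⁻ y in A x, g y := lintegral_mono hpoint
          _ = V⁻¹ * ∫⁻ x, ∫⁻ y in A x, g y := lintegral_const_mul' _ _ (ENNReal.inv_ne_top.2 hV0)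
          _ = V⁻¹ * ∫⁻ y, g y * W := by rw [hswap]
          _ = V⁻¹ * ((∫⁻ y, g y) * W) := by rw [lintegral_mul_const' _ _ hWtop]
          _ = (V⁻¹ * W) * ∫⁻ y, g y := by ring
          _ ≤ ENNReal.ofReal K * ∫⁻ y, g y := mul_le_mul_left hVW _
    _ = K * ∫ x, |b x| := by
        rw [ENNReal.toReal_mul, ENNReal.toReal_ofReal hKpos.le, hbl1]
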